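/- arXiv:1505.08083 — 3 statements merged into one kernel-verified Lean document; each statement's English description precedes it below -/
import Mathlib

section
/- Let n ≥ 2. There is no state h on the Brown algebra U_n^nc such that h ⋆_M φ = h for every tracial state φ on U_n^nc. In particular, there exists neither a monotone Haar state (a state h with φ ⋆_M h = h = h ⋆_M φ for all states φ) nor a monotone Haar trace (a tracial state h with φ ⋆_M h = h = h ⋆_M φ for all tracial states φ) on U⟨n⟩. -/
noncomputable section

/-- A state on a unital `⋆`-algebra over `ℂ`. -/
def IsState {A : Type} [Ring A] [Algebra ℂ A] [StarRing A]
    (φ : A →ₗ[ℂ] ℂ) : Prop :=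
  φ 1 = 1 ∧ ∀ a : A, 0 ≤ (φ (star a * a)).re ∧ (φ (star a * a)).im = 0

/-- A tracial state. -/
def IsTracialState {A : Type} [Ring A] [Algebra ℂ A] [StarRing A]
    (φ : A →ₗ[ℂ] ℂ) : Prop :=
  IsState φ ∧ ∀ a b : A, φ (a * b) = φ (b * a)

/-- The Brown algebra `U_n^nc`: a unital `⋆`-algebra generated by `n²` elements
`u i j` subject to the unitarity relations, together with its universal property. -/
structure BrownAlg (n : ℕ) where
  carrier : Type
  [ring : Ring carrier]
  [algebra : Algebra ℂ carrier]
  [starRing : StarRing carrier]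
  [starModule : StarModule ℂ carrier]
  u : Fin n → Fin n → carrier
  rel_left : ∀ i j, (∑ k, star (u k i) * u k j) = if i = j then 1 else 0
  rel_right : ∀ i j, (∑ k, u i k * star (u j k)) = if i = j then 1 else 0
  universal : ∀ (C : Type) [Ring C] [Algebra ℂ C] [StarRing C] [StarModule ℂ C]
      (v : Fin n → Fin n → C),
      (∀ i j, (∑ k, star (v k i) * v k j) = if i = j then 1 else 0) →
      (∀ i j, (∑ k, v i k * star (v j k)) = if i = j then 1 else 0) →
      ∃! f : carrier →⋆ₐ[ℂ] C, ∀ i j, f (u i j) = v i j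

attribute [instance] BrownAlg.ring BrownAlg.algebra BrownAlg.starRing BrownAlg.starModule

/-- The free product (coproduct) of two unital `⋆`-algebras over `ℂ`,
presented through its universal property. -/
structure FreeProd (A B : Type) [Ring A] [Algebra ℂ A] [StarRing A]
    [Ring B] [Algebra ℂ B] [StarRing B] where
  carrier : Type
  [ring : Ring carrier]
  [algebra : Algebra ℂ carrier]
  [starRing : StarRing carrier]
  [starModule : StarModule ℂ carrier]
  inl : A →⋆ₐ[ℂ] carrier
  inr : B →⋆ₐ[ℂ] carrier
  universal : ∀ (D : Type) [Ring D] [Algebra ℂ D] [StarRing D] [StarModule ℂ D]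
      (f : A →⋆ₐ[ℂ] D) (g : B →⋆ₐ[ℂ] D),
      ∃! h : carrier →⋆ₐ[ℂ] D, (∀ a, h (inl a) = f a) ∧ (∀ b, h (inr b) = g b)

attribute [instance] FreeProd.ring FreeProd.algebra FreeProd.starRing FreeProd.starModule

namespace FreeProd

variable {A B : Type} [Ring A] [Algebra ℂ A] [StarRing A]
    [Ring B] [Algebra ℂ B] [StarRing B]

/-- The canonical embedding of a tagged element into the free product. -/
def embed (F : FreeProd A B) : A ⊕ B → F.carrier :=
  Sum.elim (fun a => F.inl a) (fun b => F.inr b)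

/-- `Ψ` is the free product functional of `φ` and `ψ` on the free product `F`:
it is unital, restricts to `φ` and `ψ` on the two legs, and vanishes on alternating
products of centered elements. -/
def IsFreeProdFunctional (F : FreeProd A B) (φ : A →ₗ[ℂ] ℂ) (ψ : B →ₗ[ℂ] ℂ)
    (Ψ : F.carrier →ₗ[ℂ] ℂ) : Prop :=
  Ψ 1 = 1 ∧ (∀ a, Ψ (F.inl a) = φ a) ∧ (∀ b, Ψ (F.inr b) = ψ b) ∧
  ∀ l : List (A ⊕ B), l ≠ [] →
    l.Chain' (fun x y => x.isLeft ≠ y.isLeft) →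
    (∀ x ∈ l, Sum.elim (fun a => φ a = 0) (fun b => ψ b = 0) x) →
    Ψ ((l.map F.embed).prod) = 0

end FreeProd

section ProdFunctionals

variable {A : Type} [Ring A] [Algebra ℂ A] [StarRing A]

/-- `Ψ` is the tensor (tensor-independent) product functional of `φ` and `ψ`
relative to the counit `δc`. -/
def IsTensorProdFunctional (F : FreeProd A A) (δc : A →⋆ₐ[ℂ] ℂ)
    (φ ψ : A →ₗ[ℂ] ℂ) (Ψ : F.carrier →ₗ[ℂ] ℂ) : Prop :=
  Ψ 1 = 1 ∧
  ∀ l : List (A ⊕ A), l ≠ [] →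
    l.Chain' (fun x y => x.isLeft ≠ y.isLeft) →
    (∀ x ∈ l, Sum.elim (fun a => δc a = 0) (fun b => δc b = 0) x) →
    Ψ ((l.map F.embed).prod) =
      φ (l.filterMap Sum.getLeft?).prod * ψ (l.filterMap Sum.getRight?).prod

/-- `Ψ` is the boolean product functional of `φ` and `ψ` relative to the counit `δc`. -/
def IsBooleanProdFunctional (F : FreeProd A A) (δc : A →⋆ₐ[ℂ] ℂ)
    (φ ψ : A →ₗ[ℂ] ℂ) (Ψ : F.carrier →ₗ[ℂ] ℂ) : Prop :=
  Ψ 1 = 1 ∧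
  ∀ l : List (A ⊕ A), l ≠ [] →
    l.Chain' (fun x y => x.isLeft ≠ y.isLeft) →
    (∀ x ∈ l, Sum.elim (fun a => δc a = 0) (fun b => δc b = 0) x) →
    Ψ ((l.map F.embed).prod) = (l.map (Sum.elim (fun a => φ a) (fun b => ψ b))).prod

/-- `Ψ` is the monotone product functional of `φ` and `ψ` relative to the counit `δc`. -/
def IsMonotoneProdFunctional (F : FreeProd A A) (δc : A →⋆ₐ[ℂ] ℂ)
    (φ ψ : A →ₗ[ℂ] ℂ) (Ψ : F.carrier →ₗ[ℂ] ℂ) : Prop :=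
  Ψ 1 = 1 ∧
  ∀ l : List (A ⊕ A), l ≠ [] →
    l.Chain' (fun x y => x.isLeft ≠ y.isLeft) →
    (∀ x ∈ l, Sum.elim (fun a => δc a = 0) (fun b => δc b = 0) x) →
    Ψ ((l.map F.embed).prod) =
      φ (l.filterMap Sum.getLeft?).prod * ((l.filterMap Sum.getRight?).map (fun b => ψ b)).prod

/-- `Ψ` is the anti-monotone product functional of `φ` and `ψ` relative to the counit `δc`. -/
def IsAntiMonotoneProdFunctional (F : FreeProd A A) (δc : A →⋆ₐ[ℂ] ℂ)
    (φ ψ : A →ₗ[ℂ] ℂ) (Ψ : F.carrier →ₗ[ℂ] ℂ) : Prop :=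
  Ψ 1 = 1 ∧
  ∀ l : List (A ⊕ A), l ≠ [] →
    l.Chain' (fun x y => x.isLeft ≠ y.isLeft) →
    (∀ x ∈ l, Sum.elim (fun a => δc a = 0) (fun b => δc b = 0) x) →
    Ψ ((l.map F.embed).prod) =
      ((l.filterMap Sum.getLeft?).map (fun a => φ a)).prod * ψ (l.filterMap Sum.getRight?).prod

end ProdFunctionals

namespace BrownAlg

variable {n : ℕ}

/-- `Δ` is the coproduct of the unitary dual group `U⟨n⟩`. -/
def IsCoprod (U : BrownAlg n) (F : FreeProd U.carrier U.carrier)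
    (Δ : U.carrier →⋆ₐ[ℂ] F.carrier) : Prop :=
  ∀ i j, Δ (U.u i j) = ∑ k, F.inl (U.u i k) * F.inr (U.u k j)

/-- `δc` is the counit of the unitary dual group `U⟨n⟩`. -/
def IsCounit (U : BrownAlg n) (δc : U.carrier →⋆ₐ[ℂ] ℂ) : Prop :=
  ∀ i j, δc (U.u i j) = if i = j then 1 else 0

/-- `Σ` is the antipode of the unitary dual group `U⟨n⟩`. -/
def IsAntipode (U : BrownAlg n) (Sa : U.carrier →⋆ₐ[ℂ] U.carrier) : Prop :=
  ∀ i j, Sa (U.u i j) = star (U.u j i)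

/-- `χ = φ ⋆_F ψ`, the free convolution of the states `φ` and `ψ` on `U⟨n⟩`. -/
def FreeConv (U : BrownAlg n) (F : FreeProd U.carrier U.carrier)
    (Δ : U.carrier →⋆ₐ[ℂ] F.carrier) (φ ψ χ : U.carrier →ₗ[ℂ] ℂ) : Prop :=
  ∃ Ψ : F.carrier →ₗ[ℂ] ℂ, F.IsFreeProdFunctional φ ψ Ψ ∧ ∀ a, Ψ (Δ a) = χ a

/-- `χ = φ ⋆_T ψ`, the tensor convolution of the states `φ` and `ψ` on `U⟨n⟩`. -/
def TensorConv (U : BrownAlg n) (F : FreeProd U.carrier U.carrier)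
    (Δ : U.carrier →⋆ₐ[ℂ] F.carrier) (δc : U.carrier →⋆ₐ[ℂ] ℂ)
    (φ ψ χ : U.carrier →ₗ[ℂ] ℂ) : Prop :=
  ∃ Ψ : F.carrier →ₗ[ℂ] ℂ, IsTensorProdFunctional F δc φ ψ Ψ ∧ ∀ a, Ψ (Δ a) = χ a

/-- `χ = φ ⋆_B ψ`, the boolean convolution. -/
def BooleanConv (U : BrownAlg n) (F : FreeProd U.carrier U.carrier)
    (Δ : U.carrier →⋆ₐ[ℂ] F.carrier) (δc : U.carrier →⋆ₐ[ℂ] ℂ)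
    (φ ψ χ : U.carrier →ₗ[ℂ] ℂ) : Prop :=
  ∃ Ψ : F.carrier →ₗ[ℂ] ℂ, IsBooleanProdFunctional F δc φ ψ Ψ ∧ ∀ a, Ψ (Δ a) = χ a

/-- `χ = φ ⋆_M ψ`, the monotone convolution. -/
def MonotoneConv (U : BrownAlg n) (F : FreeProd U.carrier U.carrier)
    (Δ : U.carrier →⋆ₐ[ℂ] F.carrier) (δc : U.carrier →⋆ₐ[ℂ] ℂ)
    (φ ψ χ : U.carrier →ₗ[ℂ] ℂ) : Prop :=
  ∃ Ψ : F.carrier →ₗ[ℂ] ℂ, IsMonotoneProdFunctional F δc φ ψ Ψ ∧ ∀ a, Ψ (Δ a) = χ a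

/-- `χ = φ ⋆_AM ψ`, the anti-monotone convolution. -/
def AntiMonotoneConv (U : BrownAlg n) (F : FreeProd U.carrier U.carrier)
    (Δ : U.carrier →⋆ₐ[ℂ] F.carrier) (δc : U.carrier →⋆ₐ[ℂ] ℂ)
    (φ ψ χ : U.carrier →ₗ[ℂ] ℂ) : Prop :=
  ∃ Ψ : F.carrier →ₗ[ℂ] ℂ, IsAntiMonotoneProdFunctional F δc φ ψ Ψ ∧ ∀ a, Ψ (Δ a) = χ a

end BrownAlg


/-! ### Auxiliary material for the proof -/

section Aux


abbrev M2 := Matrix (Fin 2) (Fin 2) ℂ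

def σx : M2 := !![0,1;1,0]

lemma σx_mul : σx * σx = 1 := by
  ext i j
  fin_cases i <;> fin_cases j <;>
    simp [σx, Matrix.mul_apply, Fin.sum_univ_two, Matrix.one_apply]

lemma σx_star : star σx = σx := by
  ext i j; fin_cases i <;> fin_cases j <;> simp [σx, Matrix.star_apply]

lemma σx_trace : Matrix.trace σx = 0 := by
  simp [σx, Matrix.trace, Fin.sum_univ_two]

section Rep
variable {n : ℕ} (e : Equiv.Perm (Fin n))

def vmat : Fin n → Fin n → M2 := fun i j => if j = e i then σx else 0

lemma star_vmat (i j : Fin n) : star (vmat e i j) = vmat e i j := by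
  unfold vmat; split <;> simp [σx_star]

lemma vmat_mul (P Q : Prop) [Decidable P] [Decidable Q] :
    (if P then σx else 0) * (if Q then σx else 0) = if P ∧ Q then (1 : M2) else 0 := by
  by_cases hP : P <;> by_cases hQ : Q <;> simp [hP, hQ, σx_mul]

lemma vmat_rel_left : ∀ i j, (∑ k, star (vmat e k i) * vmat e k j) = if i = j then 1 else 0 := by
  intro i j
  have : ∀ k : Fin n, star (vmat e k i) * vmat e k j
      = if i = e k ∧ j = e k then 1 else 0 := by
    intro k; rw [star_vmat]; exact vmat_mul _ _
  rw [Finset.sum_congr rfl (fun k _ => this k)]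
  rw [show (∑ k : Fin n, if i = e k ∧ j = e k then (1:M2) else 0)
      = ∑ m : Fin n, if i = m ∧ j = m then (1:M2) else 0 from
    Equiv.sum_comp e (fun m : Fin n => if i = m ∧ j = m then (1:M2) else 0)]
  by_cases h : i = j
  · subst h; simp
  · rw [Finset.sum_eq_zero, if_neg h]
    intro m _
    by_cases h1 : i = m <;> by_cases h2 : j = m <;> simp_all

lemma vmat_rel_right : ∀ i j, (∑ k, vmat e i k * star (vmat e j k)) = if i = j then 1 else 0 := by
  intro i j
  have : ∀ k : Fin n, vmat e i k * star (vmat e j k)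
      = if k = e i ∧ k = e j then 1 else 0 := by
    intro k; rw [star_vmat]; exact vmat_mul _ _
  rw [Finset.sum_congr rfl (fun k _ => this k)]
  by_cases h : i = j
  · subst h; simp
  · have h' : ¬ (e i = e j) := fun hc => h (e.injective hc)
    rw [Finset.sum_eq_zero, if_neg h]
    intro m _
    by_cases h1 : m = e i <;> by_cases h2 : m = e j <;> simp_all

end Rep

def trState {A : Type} [Ring A] [Algebra ℂ A] [StarRing A] (π : A →⋆ₐ[ℂ] M2) :
    A →ₗ[ℂ] ℂ :=
  (2⁻¹ : ℂ) • ((Matrix.traceLinearMap (Fin 2) ℂ ℂ).comp π.toAlgHom.toLinearMap)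

lemma trState_apply {A : Type} [Ring A] [Algebra ℂ A] [StarRing A] (π : A →⋆ₐ[ℂ] M2)
    (a : A) : trState π a = 2⁻¹ * Matrix.trace (π a) := by
  simp [trState]

lemma trState_tracial {A : Type} [Ring A] [Algebra ℂ A] [StarRing A] (π : A →⋆ₐ[ℂ] M2) :
    IsTracialState (trState π) := by
  refine ⟨⟨?_, ?_⟩, ?_⟩
  · norm_num [trState_apply, Matrix.trace, Fin.sum_univ_two]
  · intro a
    have : Matrix.trace (star (π a) * π a)
        = ((∑ i, ∑ j, Complex.normSq (π a i j) : ℝ) : ℂ) := by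
      simp [Matrix.trace, Matrix.mul_apply, Matrix.star_apply,
        Complex.normSq_eq_conj_mul_self, Fin.sum_univ_two]
      ring
    rw [trState_apply, map_mul, map_star, this]
    set r : ℝ := ∑ i, ∑ j, Complex.normSq (π a i j) with hr
    have hr0 : 0 ≤ r :=
      Finset.sum_nonneg fun _ _ => Finset.sum_nonneg fun _ _ => Complex.normSq_nonneg _
    have : (2⁻¹ : ℂ) * ((r : ℝ) : ℂ) = ((2⁻¹ * r : ℝ) : ℂ) := by push_cast; ring
    rw [this]
    constructor
    · rw [Complex.ofReal_re]; linarith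
    · rw [Complex.ofReal_im]
  · intro a b
    simp only [trState_apply, map_mul]
    rw [Matrix.trace_mul_comm]

section Key
variable {A : Type} [Ring A] [Algebra ℂ A] [StarRing A]
  (F : FreeProd A A) (δc : A →⋆ₐ[ℂ] ℂ) (h ψ : A →ₗ[ℂ] ℂ) (Ψ : F.carrier →ₗ[ℂ] ℂ)

@[simp] lemma embed_inl (a : A) : F.embed (Sum.inl a) = F.inl a := rfl
@[simp] lemma embed_inr (b : A) : F.embed (Sum.inr b) = F.inr b := rfl

variable (hΨ : IsMonotoneProdFunctional F δc h ψ Ψ) (h1 : h 1 = 1) (ψ1 : ψ 1 = 1)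
include hΨ

lemma psi_inl {a : A} (ha : δc a = 0) : Ψ (F.inl a) = h a := by
  have := hΨ.2 [Sum.inl a] (by simp) (by simp [List.Chain']) (by simp [ha])
  simpa [List.filterMap_cons] using this

include h1 in
lemma psi_inr {b : A} (hb : δc b = 0) : Ψ (F.inr b) = ψ b := by
  have := hΨ.2 [Sum.inr b] (by simp) (by simp [List.Chain']) (by simp [hb])
  simpa [h1, List.filterMap_cons] using this

lemma psi_lr {a b' : A} (ha : δc a = 0) (hb' : δc b' = 0) :
    Ψ (F.inl a * F.inr b') = h a * ψ b' := by
  have := hΨ.2 [Sum.inl a, Sum.inr b'] (by simp) (by simp [List.Chain']) (by simp [ha, hb'])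
  simpa [List.filterMap_cons] using this

lemma psi_rl {b a : A} (hb : δc b = 0) (ha : δc a = 0) :
    Ψ (F.inr b * F.inl a) = h a * ψ b := by
  have := hΨ.2 [Sum.inr b, Sum.inl a] (by simp) (by simp [List.Chain']) (by simp [ha, hb])
  simpa [List.filterMap_cons] using this

lemma psi_rlr {b a b' : A} (hb : δc b = 0) (ha : δc a = 0) (hb' : δc b' = 0) :
    Ψ (F.inr b * (F.inl a * F.inr b')) = h a * (ψ b * ψ b') := by
  have := hΨ.2 [Sum.inr b, Sum.inl a, Sum.inr b'] (by simp) (by simp [List.Chain']) (by simp [ha, hb, hb'])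
  simpa [List.filterMap_cons] using this

include h1 ψ1 in
lemma psi_key (b a b' : A) (hb : ψ b = 0) (hb' : ψ b' = 0) :
    Ψ (F.inr b * (F.inl a * F.inr b')) = δc a * ψ (b * b') := by
  set β := δc b with hβ
  set α := δc a with hα
  set β' := δc b' with hβ'
  set cb := b - β • (1 : A) with hcb
  set ca := a - α • (1 : A) with hca
  set cb' := b' - β' • (1 : A) with hcb'
  have dcb : δc cb = 0 := by simp [hcb, ← hβ]
  have dca : δc ca = 0 := by simp [hca, ← hα]
  have dcb' : δc cb' = 0 := by simp [hcb', ← hβ']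
  have dcc : δc (cb * cb') = 0 := by rw [map_mul, dcb, zero_mul]
  have eb : F.inr b = F.inr cb + β • 1 := by rw [hcb, map_sub, map_smul, map_one]; abel
  have ea : F.inl a = F.inl ca + α • 1 := by rw [hca, map_sub, map_smul, map_one]; abel
  have eb' : F.inr b' = F.inr cb' + β' • 1 := by rw [hcb', map_sub, map_smul, map_one]; abel
  have hψcb : ψ cb = -β := by simp [hcb, ψ1, hb]
  have hψcb' : ψ cb' = -β' := by simp [hcb', ψ1, hb']
  have hcc : cb * cb' = b * b' - β' • b - β • b' + (β * β') • (1 : A) := by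
    rw [hcb, hcb']
    simp only [sub_mul, mul_sub, smul_mul_assoc, mul_smul_comm, one_mul, mul_one, smul_smul]
    module
  have hψcc : ψ (cb * cb') = ψ (b * b') + β * β' := by
    rw [hcc]; simp [hb, hb', ψ1]
  rw [eb, ea, eb']
  simp only [mul_add, add_mul, smul_mul_assoc, mul_smul_comm, one_mul, mul_one,
    smul_smul, map_add, map_smul, smul_eq_mul]
  rw [show F.inr cb * F.inr cb' = F.inr (cb * cb') from (map_mul _ _ _).symm]
  rw [psi_rlr F δc h ψ Ψ hΨ dcb dca dcb',
      psi_rl F δc h ψ Ψ hΨ dcb dca,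
      psi_lr F δc h ψ Ψ hΨ dca dcb',
      psi_inl F δc h ψ Ψ hΨ dca,
      psi_inr F δc h ψ Ψ hΨ h1 dcc,
      psi_inr F δc h ψ Ψ hΨ h1 dcb,
      psi_inr F δc h ψ Ψ hΨ h1 dcb',
      hΨ.1, hψcb, hψcb', hψcc]
  ring

end Key

section RepU
variable {n : ℕ} (U : BrownAlg n) (e : Equiv.Perm (Fin n))

def brownRep : U.carrier →⋆ₐ[ℂ] M2 :=
  (U.universal M2 (vmat e) (vmat_rel_left e) (vmat_rel_right e)).choose

lemma brownRep_apply (i j : Fin n) : brownRep U e (U.u i j) = vmat e i j :=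
  (U.universal M2 (vmat e) (vmat_rel_left e) (vmat_rel_right e)).choose_spec.1 i j

lemma trState_u (i j : Fin n) : trState (brownRep U e) (U.u i j) = 0 := by
  rw [trState_apply, brownRep_apply]
  unfold vmat; split <;> simp [σx_trace]

lemma trState_su (i j : Fin n) : trState (brownRep U e) (star (U.u i j)) = 0 := by
  rw [trState_apply, map_star, brownRep_apply, star_vmat]
  unfold vmat; split <;> simp [σx_trace]

lemma trState_ss (k l i j : Fin n) :
    trState (brownRep U e) (star (U.u k l) * U.u i j)
      = if l = e k ∧ j = e i then 1 else 0 := by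
  rw [trState_apply, map_mul, map_star, brownRep_apply, brownRep_apply, star_vmat]
  unfold vmat
  rw [vmat_mul]
  split <;> simp [Matrix.trace, Fin.sum_univ_two]

end RepU

end Aux

/-- For `n ≥ 2` there is no state `h` on the Brown algebra with
`h ⋆_M φ = h` for every tracial state `φ`; in particular there is neither a monotone
Haar state nor a monotone Haar trace on `U⟨n⟩`. -/
theorem no_monotone_haar_state (n : ℕ) (hn : 2 ≤ n) (U : BrownAlg n)
    (F : FreeProd U.carrier U.carrier) (Δ : U.carrier →⋆ₐ[ℂ] F.carrier)
    (hΔ : U.IsCoprod F Δ) (δc : U.carrier →⋆ₐ[ℂ] ℂ) (hδ : U.IsCounit δc) :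
    (¬ ∃ h : U.carrier →ₗ[ℂ] ℂ, IsState h ∧
        ∀ φ : U.carrier →ₗ[ℂ] ℂ, IsTracialState φ → U.MonotoneConv F Δ δc h φ h) ∧
    (¬ ∃ h : U.carrier →ₗ[ℂ] ℂ, IsState h ∧
        ∀ φ : U.carrier →ₗ[ℂ] ℂ, IsState φ →
          U.MonotoneConv F Δ δc φ h h ∧ U.MonotoneConv F Δ δc h φ h) ∧
    (¬ ∃ h : U.carrier →ₗ[ℂ] ℂ, IsTracialState h ∧
        ∀ φ : U.carrier →ₗ[ℂ] ℂ, IsTracialState φ →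
          U.MonotoneConv F Δ δc φ h h ∧ U.MonotoneConv F Δ δc h φ h) := by
  classical
  have main : ¬ ∃ h : U.carrier →ₗ[ℂ] ℂ, IsState h ∧
      ∀ φ : U.carrier →ₗ[ℂ] ℂ, IsTracialState φ → U.MonotoneConv F Δ δc h φ h := by
    rintro ⟨h, hst, hconv⟩
    set z : Fin n := ⟨0, by omega⟩ with hz
    set o : Fin n := ⟨1, by omega⟩ with ho
    have hzo : z ≠ o := by simp [hz, ho, Fin.ext_iff]
    have hgen : ∀ e : Equiv.Perm (Fin n), ∀ k l i j : Fin n,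
        h (star (U.u k l) * U.u i j)
          = trState (brownRep U e) (star (U.u k l) * U.u i j) := by
      intro e k l i j
      set ψ := trState (brownRep U e) with hψdef
      obtain ⟨Ψ, hΨ, hΨΔ⟩ := hconv ψ (trState_tracial _)
      have h1 : h 1 = 1 := hst.1
      have ψ1 : ψ 1 = 1 := (trState_tracial (brownRep U e)).1.1
      have hx : Δ (star (U.u k l) * U.u i j)
          = ∑ q, ∑ p, F.inr (star (U.u q l)) *
              (F.inl (star (U.u k q) * U.u i p) * F.inr (U.u p j)) := by
        rw [map_mul, map_star, hΔ k l, hΔ i j, star_sum, Finset.sum_mul_sum]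
        refine Finset.sum_congr rfl fun q _ => Finset.sum_congr rfl fun p _ => ?_
        rw [star_mul, ← map_star, ← map_star, map_mul]
        rw [mul_assoc, mul_assoc]
      have hδa : ∀ q p : Fin n, δc (star (U.u k q) * U.u i p)
          = (if k = q then (1:ℂ) else 0) * (if i = p then (1:ℂ) else 0) := by
        intro q p
        rw [map_mul, map_star, hδ, hδ]
        split_ifs <;> simp
      have step : h (star (U.u k l) * U.u i j)
          = ∑ q, ∑ p, ((if k = q then (1:ℂ) else 0) * (if i = p then (1:ℂ) else 0))
              * ψ (star (U.u q l) * U.u p j) := by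
        rw [← hΨΔ, hx, map_sum]
        refine Finset.sum_congr rfl fun q _ => ?_
        rw [map_sum]
        refine Finset.sum_congr rfl fun p _ => ?_
        rw [psi_key F δc h ψ Ψ hΨ h1 ψ1 _ _ _ (trState_su U e q l) (trState_u U e p j),
          hδa q p]
      rw [step]
      simp [ite_mul, Finset.sum_ite_eq, hψdef]
    have e1 : h (star (U.u z z) * U.u z z) = 1 := by
      rw [hgen 1 z z z z, trState_ss]
      simp
    have e2 : h (star (U.u z z) * U.u z z) = 0 := by
      rw [hgen (Equiv.swap z o) z z z z, trState_ss]
      have : Equiv.swap z o z = o := Equiv.swap_apply_left z o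
      rw [this, if_neg]
      exact fun hc => hzo hc.1
    rw [e1] at e2
    exact one_ne_zero e2
  refine ⟨main, ?_, ?_⟩
  · rintro ⟨h, hs, hall⟩
    exact main ⟨h, hs, fun φ hφ => (hall φ hφ.1).2⟩
  · rintro ⟨h, hs, hall⟩
    exact main ⟨h, hs.1, fun φ hφ => (hall φ hφ).2⟩
end
end

section
/- Let n ≥ 1 and let h be a state on the Brown algebra U_n^nc such that h ⋆_F φ = h for every state φ on U_n^nc (a right Haar state for the free convolution). Then h ∘ Σ = h, and h is also a left Haar state: φ ⋆_F h = h for every state φ. The same conclusion holds if 'state' is replaced by 'tracial state' throughout. -/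
noncomputable section

namespace HaarAux

open List

/-! ### Auxiliary facts about free products -/

section FreeProdAux

variable {A B : Type} [Ring A] [Algebra ℂ A] [StarRing A]
    [Ring B] [Algebra ℂ B] [StarRing B]

lemma freeProd_hom_ext (F : FreeProd A B) {D : Type} [Ring D] [Algebra ℂ D] [StarRing D]
    [StarModule ℂ D] {f g : F.carrier →⋆ₐ[ℂ] D}
    (h1 : ∀ a, f (F.inl a) = g (F.inl a)) (h2 : ∀ b, f (F.inr b) = g (F.inr b)) : f = g := by
  obtain ⟨k, hk, hu⟩ := F.universal D (g.comp F.inl) (g.comp F.inr)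
  have e1 : f = k := hu f ⟨fun a => h1 a, fun b => h2 b⟩
  have e2 : g = k := hu g ⟨fun _ => rfl, fun _ => rfl⟩
  rw [e1, e2]

/-- The set of alternating centered words (together with `1`). -/
def WordSet (F : FreeProd A B) (φ : A →ₗ[ℂ] ℂ) (ψ : B →ₗ[ℂ] ℂ) : Set F.carrier :=
  {1} ∪ {x | ∃ l : List (A ⊕ B), l ≠ [] ∧ l.Chain' (fun p q => p.isLeft ≠ q.isLeft) ∧
    (∀ y ∈ l, Sum.elim (fun a => φ a = 0) (fun b => ψ b = 0) y) ∧ (l.map F.embed).prod = x}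

lemma one_mem_wordSpan (F : FreeProd A B) (φ : A →ₗ[ℂ] ℂ) (ψ : B →ₗ[ℂ] ℂ) :
    (1 : F.carrier) ∈ Submodule.span ℂ (WordSet F φ ψ) :=
  Submodule.subset_span (Or.inl rfl)

lemma word_mem_wordSpan (F : FreeProd A B) (φ : A →ₗ[ℂ] ℂ) (ψ : B →ₗ[ℂ] ℂ)
    {l : List (A ⊕ B)} (h1 : l ≠ []) (h2 : l.Chain' (fun p q => p.isLeft ≠ q.isLeft))
    (h3 : ∀ y ∈ l, Sum.elim (fun a => φ a = 0) (fun b => ψ b = 0) y) :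
    (l.map F.embed).prod ∈ Submodule.span ℂ (WordSet F φ ψ) :=
  Submodule.subset_span (Or.inr ⟨l, h1, h2, h3, rfl⟩)

lemma prod_mul_prod_mem (F : FreeProd A B) (φ : A →ₗ[ℂ] ℂ) (ψ : B →ₗ[ℂ] ℂ)
    (hφ : φ 1 = 1) (hψ : ψ 1 = 1) :
    ∀ N (l₁ l₂ : List (A ⊕ B)), l₁.length + l₂.length ≤ N → l₁ ≠ [] → l₂ ≠ [] →
    l₁.Chain' (fun p q => p.isLeft ≠ q.isLeft) →
    l₂.Chain' (fun p q => p.isLeft ≠ q.isLeft) →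
    (∀ y ∈ l₁, Sum.elim (fun a => φ a = 0) (fun b => ψ b = 0) y) →
    (∀ y ∈ l₂, Sum.elim (fun a => φ a = 0) (fun b => ψ b = 0) y) →
    (l₁.map F.embed).prod * (l₂.map F.embed).prod ∈ Submodule.span ℂ (WordSet F φ ψ) := by
  intro N
  induction N with
  | zero =>
    intro l₁ l₂ hlen h1 _ _ _ _ _
    cases l₁ with
    | nil => exact absurd rfl h1
    | cons a l => simp at hlen
  | succ N ih =>
    intro l₁ l₂ hlen hne1 hne2 hc1 hc2 hz1 hz2
    rcases l₁.eq_nil_or_concat with rfl | ⟨l₁', x, hcat⟩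
    · exact absurd rfl hne1
    rw [List.concat_eq_append] at hcat
    subst hcat
    cases l₂ with
    | nil => exact absurd rfl hne2
    | cons y l₂' =>
    have P1 : ((l₁' ++ [x]).map F.embed).prod
        = (l₁'.map F.embed).prod * F.embed x := by
      rw [List.map_append, List.prod_append]; simp
    have P2 : ((y :: l₂').map F.embed).prod = F.embed y * (l₂'.map F.embed).prod := by
      simp
    have hc1s := List.isChain_append.1 hc1
    have hlast : ∀ p ∈ l₁'.getLast?, p.isLeft ≠ x.isLeft := by
      intro p hp
      exact hc1s.2.2 p hp x rfl
    have hc2s := List.isChain_cons.1 hc2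
    by_cases hxy : x.isLeft = y.isLeft
    · -- same side: absorb the middle letters
      -- helper for the remaining product of the two shortened words
      have hrest : (l₁'.map F.embed).prod * (l₂'.map F.embed).prod ∈
          Submodule.span ℂ (WordSet F φ ψ) := by
        rcases eq_or_ne l₁' [] with rfl | hne1'
        · rcases eq_or_ne l₂' [] with rfl | hne2'
          · simpa using one_mem_wordSpan F φ ψ
          · simpa using word_mem_wordSpan F φ ψ hne2' hc2s.2
              (fun z hz => hz2 z (List.mem_cons_of_mem _ hz))
        · rcases eq_or_ne l₂' [] with rfl | hne2'
          · simpa using word_mem_wordSpan F φ ψ hne1' hc1s.1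
              (fun z hz => hz1 z (List.mem_append_left _ hz))
          · refine ih l₁' l₂' ?_ hne1' hne2' hc1s.1 hc2s.2
              (fun z hz => hz1 z (List.mem_append_left _ hz))
              (fun z hz => hz2 z (List.mem_cons_of_mem _ hz))
            simp only [List.length_append, List.length_cons, List.length_singleton] at hlen ⊢
            omega
      -- now case on which side x and y live
      cases x with
      | inl a =>
        cases y with
        | inr b => simp at hxy
        | inl b =>
          set c : A := a * b - φ (a * b) • 1 with hcdef
          have hc0 : φ c = 0 := by
            rw [hcdef, map_sub, map_smul, hφ, smul_eq_mul, mul_one, sub_self]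
          have hembed : F.embed (Sum.inl a : A ⊕ B) * F.embed (Sum.inl b : A ⊕ B)
              = F.inl c + φ (a * b) • (1 : F.carrier) := by
            show F.inl a * F.inl b = _
            rw [← map_mul, hcdef, map_sub, map_smul, map_one]
            abel
          have hmid : ∀ z ∈ (l₁' ++ (Sum.inl c : A ⊕ B) :: l₂'),
              Sum.elim (fun a => φ a = 0) (fun b => ψ b = 0) z := by
            intro z hz
            rcases List.mem_append.1 hz with hz | hz
            · exact hz1 z (List.mem_append_left _ hz)
            · rcases List.mem_cons.1 hz with rfl | hz
              · exact hc0
              · exact hz2 z (List.mem_cons_of_mem _ hz)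
          have hchainmid : (l₁' ++ (Sum.inl c : A ⊕ B) :: l₂').Chain'
              (fun p q => p.isLeft ≠ q.isLeft) := by
            refine List.isChain_append.2 ⟨hc1s.1, ?_, ?_⟩
            · refine List.isChain_cons.2 ⟨?_, hc2s.2⟩
              intro q hq
              have := hc2s.1 q hq
              simpa using this
            · intro p hp q hq
              simp only [List.head?_cons, Option.mem_some_iff] at hq
              subst hq
              have := hlast p hp
              simpa using this
          have hmidmem : (((l₁' ++ (Sum.inl c : A ⊕ B) :: l₂').map F.embed)).prod ∈
              Submodule.span ℂ (WordSet F φ ψ) :=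
            word_mem_wordSpan F φ ψ (by simp) hchainmid hmid
          have hmidprod : (((l₁' ++ (Sum.inl c : A ⊕ B) :: l₂').map F.embed)).prod
              = (l₁'.map F.embed).prod * (F.inl c * (l₂'.map F.embed).prod) := by
            rw [List.map_append, List.prod_append, List.map_cons, List.prod_cons]
            rfl
          have total : ((l₁' ++ [Sum.inl a]).map F.embed).prod
                * (((Sum.inl b : A ⊕ B) :: l₂').map F.embed).prod
              = (l₁'.map F.embed).prod * (F.inl c * (l₂'.map F.embed).prod)
                + φ (a * b) • ((l₁'.map F.embed).prod * (l₂'.map F.embed).prod) := by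
            rw [P1, P2, mul_assoc, ← mul_assoc (F.embed (Sum.inl a)), hembed]
            rw [add_mul, mul_add, smul_mul_assoc, one_mul, mul_smul_comm]
          rw [total, ← hmidprod]
          exact Submodule.add_mem _ hmidmem (Submodule.smul_mem _ _ hrest)
      | inr a =>
        cases y with
        | inl b => simp at hxy
        | inr b =>
          set c : B := a * b - ψ (a * b) • 1 with hcdef
          have hc0 : ψ c = 0 := by
            rw [hcdef, map_sub, map_smul, hψ, smul_eq_mul, mul_one, sub_self]
          have hembed : F.embed (Sum.inr a : A ⊕ B) * F.embed (Sum.inr b : A ⊕ B)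
              = F.inr c + ψ (a * b) • (1 : F.carrier) := by
            show F.inr a * F.inr b = _
            rw [← map_mul, hcdef, map_sub, map_smul, map_one]
            abel
          have hmid : ∀ z ∈ (l₁' ++ (Sum.inr c : A ⊕ B) :: l₂'),
              Sum.elim (fun a => φ a = 0) (fun b => ψ b = 0) z := by
            intro z hz
            rcases List.mem_append.1 hz with hz | hz
            · exact hz1 z (List.mem_append_left _ hz)
            · rcases List.mem_cons.1 hz with rfl | hz
              · exact hc0
              · exact hz2 z (List.mem_cons_of_mem _ hz)
          have hchainmid : (l₁' ++ (Sum.inr c : A ⊕ B) :: l₂').Chain'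
              (fun p q => p.isLeft ≠ q.isLeft) := by
            refine List.isChain_append.2 ⟨hc1s.1, ?_, ?_⟩
            · refine List.isChain_cons.2 ⟨?_, hc2s.2⟩
              intro q hq
              have := hc2s.1 q hq
              simpa using this
            · intro p hp q hq
              simp only [List.head?_cons, Option.mem_some_iff] at hq
              subst hq
              have := hlast p hp
              simpa using this
          have hmidmem : (((l₁' ++ (Sum.inr c : A ⊕ B) :: l₂').map F.embed)).prod ∈
              Submodule.span ℂ (WordSet F φ ψ) :=
            word_mem_wordSpan F φ ψ (by simp) hchainmid hmid
          have hmidprod : (((l₁' ++ (Sum.inr c : A ⊕ B) :: l₂').map F.embed)).prod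
              = (l₁'.map F.embed).prod * (F.inr c * (l₂'.map F.embed).prod) := by
            rw [List.map_append, List.prod_append, List.map_cons, List.prod_cons]
            rfl
          have total : ((l₁' ++ [Sum.inr a]).map F.embed).prod
                * (((Sum.inr b : A ⊕ B) :: l₂').map F.embed).prod
              = (l₁'.map F.embed).prod * (F.inr c * (l₂'.map F.embed).prod)
                + ψ (a * b) • ((l₁'.map F.embed).prod * (l₂'.map F.embed).prod) := by
            rw [P1, P2, mul_assoc, ← mul_assoc (F.embed (Sum.inr a)), hembed]
            rw [add_mul, mul_add, smul_mul_assoc, one_mul, mul_smul_comm]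
          rw [total, ← hmidprod]
          exact Submodule.add_mem _ hmidmem (Submodule.smul_mem _ _ hrest)
    · -- different sides: the concatenation is an alternating word
      have hchain : (l₁' ++ [x] ++ y :: l₂').Chain' (fun p q => p.isLeft ≠ q.isLeft) := by
        refine List.isChain_append.2 ⟨hc1, hc2, ?_⟩
        intro p hp q hq
        simp only [List.head?_cons, Option.mem_some_iff] at hq
        subst hq
        have hp' : (l₁' ++ [x]).getLast? = some x := by
          simp [List.getLast?_append]
        rw [hp'] at hp
        simp only [Option.mem_some_iff] at hp
        subst hp
        exact hxy
      have hmem : (((l₁' ++ [x] ++ y :: l₂').map F.embed)).prod ∈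
          Submodule.span ℂ (WordSet F φ ψ) := by
        refine word_mem_wordSpan F φ ψ (by simp) hchain ?_
        intro z hz
        rcases List.mem_append.1 hz with hz | hz
        · exact hz1 z hz
        · exact hz2 z hz
      rw [List.map_append, List.prod_append] at hmem
      exact hmem

lemma wordSpan_mul_mem (F : FreeProd A B) (φ : A →ₗ[ℂ] ℂ) (ψ : B →ₗ[ℂ] ℂ)
    (hφ : φ 1 = 1) (hψ : ψ 1 = 1) {x y : F.carrier}
    (hx : x ∈ Submodule.span ℂ (WordSet F φ ψ))
    (hy : y ∈ Submodule.span ℂ (WordSet F φ ψ)) :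
    x * y ∈ Submodule.span ℂ (WordSet F φ ψ) := by
  refine Submodule.span_induction ?_ ?_ ?_ ?_ hx
  · intro t ht
    refine Submodule.span_induction ?_ ?_ ?_ ?_ hy
    · intro s hs
      rcases ht with rfl | ⟨l₁, h11, h12, h13, rfl⟩
      · rw [one_mul]; exact Submodule.subset_span hs
      rcases hs with rfl | ⟨l₂, h21, h22, h23, rfl⟩
      · rw [mul_one]; exact word_mem_wordSpan F φ ψ h11 h12 h13
      exact prod_mul_prod_mem F φ ψ hφ hψ (l₁.length + l₂.length) l₁ l₂ le_rfl
        h11 h21 h12 h22 h13 h23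
    · rw [mul_zero]; exact Submodule.zero_mem _
    · intro u v _ _ hu hv
      rw [mul_add]; exact Submodule.add_mem _ hu hv
    · intro c u _ hu
      rw [mul_smul_comm]; exact Submodule.smul_mem _ _ hu
  · rw [zero_mul]; exact Submodule.zero_mem _
  · intro u v _ _ hu hv
    rw [add_mul]; exact Submodule.add_mem _ hu hv
  · intro c u _ hu
    rw [smul_mul_assoc]; exact Submodule.smul_mem _ _ hu

lemma mem_adjoin_top (F : FreeProd A B) (x : F.carrier) :
    x ∈ Algebra.adjoin ℂ (Set.range ⇑F.inl ∪ Set.range ⇑F.inr) := by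
  haveI := F.starModule
  set A₀ := Algebra.adjoin ℂ (Set.range ⇑F.inl ∪ Set.range ⇑F.inr) with hA₀
  have hstar : ∀ y, y ∈ A₀ → star y ∈ A₀ := by
    intro y hy
    induction hy using Algebra.adjoin_induction with
    | mem z hz =>
      rcases hz with ⟨a, rfl⟩ | ⟨b, rfl⟩
      · rw [← map_star]
        exact Algebra.subset_adjoin (Or.inl ⟨star a, rfl⟩)
      · rw [← map_star]
        exact Algebra.subset_adjoin (Or.inr ⟨star b, rfl⟩)
    | algebraMap r =>
      rw [← algebraMap_star_comm]
      exact Subalgebra.algebraMap_mem _ _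
    | add u v _ _ hu hv => rw [star_add]; exact add_mem hu hv
    | mul u v _ _ hu hv => rw [star_mul]; exact mul_mem hv hu
  let S₀ : StarSubalgebra ℂ F.carrier :=
    { toSubalgebra := A₀, star_mem' := fun {a} ha => hstar a ha }
  obtain ⟨k, ⟨hk1, hk2⟩, _⟩ := F.universal S₀
    (F.inl.codRestrict S₀ (fun a => Algebra.subset_adjoin (Or.inl ⟨a, rfl⟩)))
    (F.inr.codRestrict S₀ (fun b => Algebra.subset_adjoin (Or.inr ⟨b, rfl⟩)))
  obtain ⟨j, _, hjun⟩ := F.universal F.carrier F.inl F.inr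
  have e1 : S₀.subtype.comp k = j := by
    refine hjun _ ⟨fun a => ?_, fun b => ?_⟩
    · show S₀.subtype (k (F.inl a)) = F.inl a
      rw [hk1]; rfl
    · show S₀.subtype (k (F.inr b)) = F.inr b
      rw [hk2]; rfl
  have e2 : StarAlgHom.id ℂ F.carrier = j := hjun _ ⟨fun _ => rfl, fun _ => rfl⟩
  have e3 : S₀.subtype (k x) = x := by
    rw [show S₀.subtype (k x) = (S₀.subtype.comp k) x from rfl, e1, ← e2]; rfl
  have := (k x).2
  rw [show ((k x : F.carrier)) = x from e3] at this
  exact this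

lemma wordSpan_top (F : FreeProd A B) (φ : A →ₗ[ℂ] ℂ) (ψ : B →ₗ[ℂ] ℂ)
    (hφ : φ 1 = 1) (hψ : ψ 1 = 1) (x : F.carrier) :
    x ∈ Submodule.span ℂ (WordSet F φ ψ) := by
  have hx := mem_adjoin_top F x
  induction hx using Algebra.adjoin_induction with
  | mem z hz =>
    rcases hz with ⟨a, rfl⟩ | ⟨b, rfl⟩
    · have hcz : φ (a - φ a • 1) = 0 := by
        rw [map_sub, map_smul, hφ, smul_eq_mul, mul_one, sub_self]
      have hword : F.inl (a - φ a • 1) ∈ Submodule.span ℂ (WordSet F φ ψ) := by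
        have := word_mem_wordSpan F φ ψ (l := [Sum.inl (a - φ a • 1)])
          (by simp) (List.isChain_singleton _) (by
            intro z hz
            rcases List.mem_singleton.1 hz with rfl
            exact hcz)
        rw [List.map_cons, List.map_nil, List.prod_cons, List.prod_nil, mul_one] at this
        exact this
      have hdecomp : F.inl a = F.inl (a - φ a • 1) + φ a • (1 : F.carrier) := by
        rw [map_sub, map_smul, map_one]; abel
      rw [hdecomp]
      exact Submodule.add_mem _ hword
        (Submodule.smul_mem _ _ (one_mem_wordSpan F φ ψ))
    · have hcz : ψ (b - ψ b • 1) = 0 := by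
        rw [map_sub, map_smul, hψ, smul_eq_mul, mul_one, sub_self]
      have hword : F.inr (b - ψ b • 1) ∈ Submodule.span ℂ (WordSet F φ ψ) := by
        have := word_mem_wordSpan F φ ψ (l := [Sum.inr (b - ψ b • 1)])
          (by simp) (List.isChain_singleton _) (by
            intro z hz
            rcases List.mem_singleton.1 hz with rfl
            exact hcz)
        rw [List.map_cons, List.map_nil, List.prod_cons, List.prod_nil, mul_one] at this
        exact this
      have hdecomp : F.inr b = F.inr (b - ψ b • 1) + ψ b • (1 : F.carrier) := by
        rw [map_sub, map_smul, map_one]; abel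
      rw [hdecomp]
      exact Submodule.add_mem _ hword
        (Submodule.smul_mem _ _ (one_mem_wordSpan F φ ψ))
  | algebraMap r =>
    rw [Algebra.algebraMap_eq_smul_one]
    exact Submodule.smul_mem _ _ (one_mem_wordSpan F φ ψ)
  | add u v _ _ hu hv => exact Submodule.add_mem _ hu hv
  | mul u v _ _ hu hv => exact wordSpan_mul_mem F φ ψ hφ hψ hu hv

lemma fpf_unique (F : FreeProd A B) (φ : A →ₗ[ℂ] ℂ) (ψ : B →ₗ[ℂ] ℂ)
    (hφ : φ 1 = 1) (hψ : ψ 1 = 1) {Ψ₁ Ψ₂ : F.carrier →ₗ[ℂ] ℂ}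
    (H1 : F.IsFreeProdFunctional φ ψ Ψ₁) (H2 : F.IsFreeProdFunctional φ ψ Ψ₂) :
    Ψ₁ = Ψ₂ := by
  ext x
  have hx := wordSpan_top F φ ψ hφ hψ x
  induction hx using Submodule.span_induction with
  | mem z hz =>
    rcases hz with hz | ⟨l, h1, h2, h3, rfl⟩
    · rcases hz with rfl
      rw [H1.1, H2.1]
    · rw [H1.2.2.2 l h1 h2 h3, H2.2.2.2 l h1 h2 h3]
  | zero => simp
  | add u v _ _ hu hv => rw [map_add, map_add, hu, hv]
  | smul c u _ hu => rw [map_smul, map_smul, hu]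

end FreeProdAux

/-! ### Auxiliary facts about the Brown algebra -/

section BrownAux

variable {n : ℕ}

lemma brown_hom_ext (U : BrownAlg n) {C : Type} [Ring C] [Algebra ℂ C] [StarRing C]
    [StarModule ℂ C] {f g : U.carrier →⋆ₐ[ℂ] C}
    (hfg : ∀ i j, f (U.u i j) = g (U.u i j)) : f = g := by
  have hrel1 : ∀ i j, (∑ k, star (f (U.u k i)) * f (U.u k j)) = if i = j then (1:C) else 0 := by
    intro i j
    calc ∑ k, star (f (U.u k i)) * f (U.u k j)
        = f (∑ k, star (U.u k i) * U.u k j) := by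
          rw [map_sum]
          exact Finset.sum_congr rfl fun k _ => by rw [map_mul, map_star]
      _ = if i = j then 1 else 0 := by
          rw [U.rel_left, apply_ite f, map_one, map_zero]
  have hrel2 : ∀ i j, (∑ k, f (U.u i k) * star (f (U.u j k))) = if i = j then (1:C) else 0 := by
    intro i j
    calc ∑ k, f (U.u i k) * star (f (U.u j k))
        = f (∑ k, U.u i k * star (U.u j k)) := by
          rw [map_sum]
          exact Finset.sum_congr rfl fun k _ => by rw [map_mul, map_star]
      _ = if i = j then 1 else 0 := by
          rw [U.rel_right, apply_ite f, map_one, map_zero]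
  obtain ⟨f₀, _, hu⟩ := U.universal C (fun i j => f (U.u i j)) hrel1 hrel2
  rw [hu f (fun i j => rfl), hu g (fun i j => (hfg i j).symm)]

lemma main_aux (U : BrownAlg n) (F : FreeProd U.carrier U.carrier)
    (Δ : U.carrier →⋆ₐ[ℂ] F.carrier) (hΔ : U.IsCoprod F Δ)
    (Sa : U.carrier →⋆ₐ[ℂ] U.carrier) (hS : U.IsAntipode Sa)
    (P : (U.carrier →ₗ[ℂ] ℂ) → Prop)
    (Pone : ∀ φ, P φ → φ 1 = 1)
    (Pcomp : ∀ φ, P φ → P (φ ∘ₗ Sa.toAlgHom.toLinearMap))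
    (h : U.carrier →ₗ[ℂ] ℂ) (hP : P h)
    (haar : ∀ φ, P φ → U.FreeConv F Δ h φ h) :
    (∀ a, h (Sa a) = h a) ∧ (∀ φ, P φ → U.FreeConv F Δ φ h h) := by
  have h1 : h 1 = 1 := Pone h hP
  -- the antipode is an involution
  have SaSa : ∀ a, Sa (Sa a) = a := by
    have e : Sa.comp Sa = StarAlgHom.id ℂ U.carrier := by
      refine brown_hom_ext U fun i j => ?_
      show Sa (Sa (U.u i j)) = U.u i j
      rw [hS, map_star, hS, star_star]
    intro a
    exact DFunLike.congr_fun e a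
  -- the "flip-and-antipode" endomorphism G of the free product
  obtain ⟨G, ⟨hG1, hG2⟩, _⟩ := F.universal F.carrier (F.inr.comp Sa) (F.inl.comp Sa)
  have hG1' : ∀ a, G (F.inl a) = F.inr (Sa a) := fun a => hG1 a
  have hG2' : ∀ b, G (F.inr b) = F.inl (Sa b) := fun b => hG2 b
  -- G intertwines the coproduct and the antipode
  have GΔ : ∀ a, G (Δ a) = Δ (Sa a) := by
    have e : (G.comp Δ) = Δ.comp Sa := by
      refine brown_hom_ext U fun i j => ?_
      have lhs : (G.comp Δ) (U.u i j)
          = ∑ k, F.inr (star (U.u k i)) * F.inl (star (U.u j k)) := by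
        show G (Δ (U.u i j)) = _
        rw [hΔ, map_sum]
        refine Finset.sum_congr rfl fun k _ => ?_
        rw [map_mul, hG1', hG2', hS, hS]
      have rhs : (Δ.comp Sa) (U.u i j)
          = ∑ k, F.inr (star (U.u k i)) * F.inl (star (U.u j k)) := by
        show Δ (Sa (U.u i j)) = _
        rw [hS, map_star, hΔ, star_sum]
        refine Finset.sum_congr rfl fun k _ => ?_
        rw [star_mul, ← map_star, ← map_star]
      rw [lhs, rhs]
    intro a
    exact DFunLike.congr_fun e a
  set h' : U.carrier →ₗ[ℂ] ℂ := h ∘ₗ Sa.toAlgHom.toLinearMap with hh'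
  have h'1 : h' 1 = 1 := by
    show h (Sa 1) = 1
    rw [map_one]; exact h1
  -- key step: from right invariance of `h` we get left invariance of `h'`
  have key : ∀ φ, P φ → U.FreeConv F Δ φ h' h' := by
    intro φ hφ
    obtain ⟨Ψ, ⟨hΨ1, hΨl, hΨr, hΨw⟩, hΨΔ⟩ := haar (φ ∘ₗ Sa.toAlgHom.toLinearMap) (Pcomp φ hφ)
    set m : U.carrier ⊕ U.carrier → U.carrier ⊕ U.carrier :=
      Sum.elim (fun a => Sum.inr (Sa a)) (fun b => Sum.inl (Sa b)) with hm
    have hGe : ∀ x, G (F.embed x) = F.embed (m x) := by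
      intro x
      cases x with
      | inl a => exact hG1' a
      | inr b => exact hG2' b
    refine ⟨Ψ ∘ₗ G.toAlgHom.toLinearMap, ⟨?_, ?_, ?_, ?_⟩, ?_⟩
    · show Ψ (G 1) = 1
      rw [map_one]; exact hΨ1
    · intro a
      show Ψ (G (F.inl a)) = φ a
      rw [hG1']
      have := hΨr (Sa a)
      rw [this]
      show φ (Sa (Sa a)) = φ a
      rw [SaSa]
    · intro b
      show Ψ (G (F.inr b)) = h' b
      rw [hG2']
      exact hΨl (Sa b)
    · intro l hl hchain hcent
      show Ψ (G ((l.map F.embed).prod)) = 0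
      have hGprod : G ((l.map F.embed).prod) = ((l.map m).map F.embed).prod := by
        rw [map_list_prod, List.map_map, List.map_map]
        congr 1
        exact List.map_congr_left fun x _ => hGe x
      rw [hGprod]
      refine hΨw (l.map m) ?_ ?_ ?_
      · intro hcon
        exact hl (List.map_eq_nil_iff.1 hcon)
      · refine List.isChain_map_of_isChain m ?_ hchain
        intro p q hpq
        cases p with
        | inl a =>
          cases q with
          | inl b => exact absurd rfl hpq
          | inr b =>
            show (Sum.inr (Sa a) : U.carrier ⊕ U.carrier).isLeft
              ≠ (Sum.inl (Sa b) : U.carrier ⊕ U.carrier).isLeft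
            simp
        | inr a =>
          cases q with
          | inl b =>
            show (Sum.inl (Sa a) : U.carrier ⊕ U.carrier).isLeft
              ≠ (Sum.inr (Sa b) : U.carrier ⊕ U.carrier).isLeft
            simp
          | inr b => exact absurd rfl hpq
      · intro z hz
        obtain ⟨w, hw, rfl⟩ := List.mem_map.1 hz
        have hcw := hcent w hw
        cases w with
        | inl a =>
          show (φ ∘ₗ Sa.toAlgHom.toLinearMap) (Sa a) = 0
          show φ (Sa (Sa a)) = 0
          rw [SaSa]
          exact hcw
        | inr b =>
          exact hcw
    · intro a
      show Ψ (G (Δ a)) = h' a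
      rw [GΔ]
      exact hΨΔ (Sa a)
  have hP' : P h' := Pcomp h hP
  obtain ⟨Ψ₁, H₁, hΨ₁⟩ := haar h' hP'
  obtain ⟨Ψ₂, H₂, hΨ₂⟩ := key h hP
  have hEq : Ψ₁ = Ψ₂ := fpf_unique F h h' h1 h'1 H₁ H₂
  have heq : ∀ a, h a = h' a := by
    intro a
    rw [← hΨ₁ a, hEq, hΨ₂ a]
  have h'h : h' = h := LinearMap.ext fun a => (heq a).symm
  constructor
  · intro a
    exact (heq a).symm
  · intro φ hφ
    have := key φ hφ
    rwa [h'h] at this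

end BrownAux

end HaarAux

/-- A right Haar state for the free convolution on `U⟨n⟩` satisfies
`h ∘ Σ = h` and is also a left Haar state; the same holds with 'state' replaced by
'tracial state'. -/
theorem right_haar_is_left_haar (n : ℕ) (hn : 1 ≤ n) (U : BrownAlg n)
    (F : FreeProd U.carrier U.carrier) (Δ : U.carrier →⋆ₐ[ℂ] F.carrier)
    (hΔ : U.IsCoprod F Δ) (Sa : U.carrier →⋆ₐ[ℂ] U.carrier) (hS : U.IsAntipode Sa) :
    (∀ h : U.carrier →ₗ[ℂ] ℂ, IsState h →
      (∀ φ : U.carrier →ₗ[ℂ] ℂ, IsState φ → U.FreeConv F Δ h φ h) →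
      (∀ a, h (Sa a) = h a) ∧
      (∀ φ : U.carrier →ₗ[ℂ] ℂ, IsState φ → U.FreeConv F Δ φ h h)) ∧
    (∀ h : U.carrier →ₗ[ℂ] ℂ, IsTracialState h →
      (∀ φ : U.carrier →ₗ[ℂ] ℂ, IsTracialState φ → U.FreeConv F Δ h φ h) →
      (∀ a, h (Sa a) = h a) ∧
      (∀ φ : U.carrier →ₗ[ℂ] ℂ, IsTracialState φ → U.FreeConv F Δ φ h h)) := by
  constructor
  · intro h hstate haar
    refine HaarAux.main_aux U F Δ hΔ Sa hS IsState (fun φ hp => hp.1) ?_ h hstate haar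
    intro φ hφ
    constructor
    · show φ (Sa 1) = 1
      rw [map_one]; exact hφ.1
    · intro a
      have e : (φ ∘ₗ Sa.toAlgHom.toLinearMap) (star a * a) = φ (star (Sa a) * Sa a) := by
        show φ (Sa (star a * a)) = _
        rw [map_mul, map_star]
      rw [e]
      exact hφ.2 (Sa a)
  · intro h hstate haar
    refine HaarAux.main_aux U F Δ hΔ Sa hS IsTracialState (fun φ hp => hp.1.1) ?_ h hstate haar
    intro φ hφ
    refine ⟨⟨?_, ?_⟩, ?_⟩
    · show φ (Sa 1) = 1
      rw [map_one]; exact hφ.1.1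
    · intro a
      have e : (φ ∘ₗ Sa.toAlgHom.toLinearMap) (star a * a) = φ (star (Sa a) * Sa a) := by
        show φ (Sa (star a * a)) = _
        rw [map_mul, map_star]
      rw [e]
      exact hφ.1.2 (Sa a)
    · intro a b
      show φ (Sa (a * b)) = φ (Sa (b * a))
      rw [show Sa (a * b) = Sa a * Sa b from map_mul Sa a b,
          show Sa (b * a) = Sa b * Sa a from map_mul Sa b a]
      exact hφ.2 (Sa a) (Sa b)
end
end

section
/- Let (A,φ) be a noncommutative probability space with free cumulants (κ_q). Let r ≥ 1 and let {1,…,r} = E ∪ F be a disjoint union, σ a non-crossing partition of E, and suppose K(σ) is a partition of F such that σ ∪ K(σ) is a non-crossing partition of {1,…,r} and every partition μ of F with σ ∪ μ non-crossing refines K(σ). Then for all a_1,…,a_r ∈ A: ∑_{μ ∈ NC(F), σ∪μ ∈ NC(r)} κ_μ(a_1,…,a_r) = φ_{K(σ)}(a_1,…,a_r), where for a partition π of a subset S ⊆ {1,…,r} one sets κ_π(a_1,…,a_r) = ∏_{blocks {i_1<…<i_k} of π} κ_k(a_{i_1},…,a_{i_k}) and φ_π(a_1,…,a_r) = ∏_{blocks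 {i_1<…<i_k} of π} φ(a_{i_1}⋯a_{i_k}). -/
noncomputable section

open scoped Classical

/-- `P` is a partition of the subset `S` of `{0, …, q-1}`. -/
def IsPartitionOn (q : ℕ) (S : Finset (Fin q)) (P : Finset (Finset (Fin q))) : Prop :=
  (∀ B ∈ P, B.Nonempty ∧ B ⊆ S) ∧ ∀ i ∈ S, ∃! B, B ∈ P ∧ i ∈ B

/-- The collection of blocks `P` is non-crossing. -/
def IsNonCrossing (q : ℕ) (P : Finset (Finset (Fin q))) : Prop :=
  ¬ ∃ (B₁ B₂ : Finset (Fin q)) (i j k l : Fin q),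
      B₁ ∈ P ∧ B₂ ∈ P ∧ B₁ ≠ B₂ ∧
      i < j ∧ j < k ∧ k < l ∧ i ∈ B₁ ∧ k ∈ B₁ ∧ j ∈ B₂ ∧ l ∈ B₂

/-- The elements of the block `B`, listed in increasing order of their indices. -/
def blockList {A : Type} {q : ℕ} (a : Fin q → A) (B : Finset (Fin q)) : List A :=
  (B.sort (· ≤ ·)).map a

/-- `κ_P(a₁, …, a_q)`: the product over the blocks of `P` of the cumulants. -/
def cumPart {A : Type} (κ : List A → ℂ) {q : ℕ} (a : Fin q → A)
    (P : Finset (Finset (Fin q))) : ℂ :=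
  ∏ B ∈ P, κ (blockList a B)

/-- `φ_P(a₁, …, a_q)`: the product over the blocks of `P` of the moments. -/
def momPart {A : Type} [Ring A] [Algebra ℂ A] (φ : A →ₗ[ℂ] ℂ) {q : ℕ}
    (a : Fin q → A) (P : Finset (Finset (Fin q))) : ℂ :=
  ∏ B ∈ P, φ (blockList a B).prod

/-- `κ` is the family of free cumulants of `(A, φ)`, encoded as a function on lists:
`κ [a₁, …, a_q] = κ_q(a₁, …, a_q)`.  It is multilinear and satisfies the
moment-cumulant relations over non-crossing partitions. -/
def IsCumulantFamily {A : Type} [Ring A] [Algebra ℂ A] (φ : A →ₗ[ℂ] ℂ)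
    (κ : List A → ℂ) : Prop :=
  (∀ (l₁ l₂ : List A) (c : ℂ) (x y : A),
      κ (l₁ ++ (c • x + y) :: l₂) = c * κ (l₁ ++ x :: l₂) + κ (l₁ ++ y :: l₂)) ∧
  ∀ q : ℕ, 0 < q → ∀ a : Fin q → A,
    φ (List.ofFn a).prod =
      ∑ P ∈ Finset.univ.filter (fun P : Finset (Finset (Fin q)) =>
          IsPartitionOn q Finset.univ P ∧ IsNonCrossing q P),
        cumPart κ a P


theorem sort_image_strictMono' {α β : Type*} [LinearOrder α] [LinearOrder β] [DecidableEq β]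
    {f : α → β} (hf : StrictMono f) (s : Finset α) :
    (s.image f).sort (· ≤ ·) = (s.sort (· ≤ ·)).map f := by
  refine (fun hp h1 h2 => List.Perm.eq_of_pairwise' (r := (· ≤ ·)) h1 h2 hp) ?_ ?_ ?_
  · rw [← Multiset.coe_eq_coe, Finset.sort_eq, ← Multiset.map_coe, Finset.sort_eq,
      Finset.image_val, Multiset.dedup_eq_self.2]
    exact Multiset.Nodup.map hf.injective s.nodup
  · exact Finset.pairwise_sort _ _
  · exact List.Pairwise.map f (fun _ _ h => hf.monotone h) (Finset.pairwise_sort s _)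

theorem isNonCrossing_of_subset {r : ℕ} {P Q : Finset (Finset (Fin r))}
    (h : P ⊆ Q) (hQ : IsNonCrossing r Q) : IsNonCrossing r P := by
  rintro ⟨B₁, B₂, i, j, k, l, h1, h2, rest⟩
  exact hQ ⟨B₁, B₂, i, j, k, l, h h1, h h2, rest⟩

theorem moment_eq_block_sum {A : Type} [Ring A] [Algebra ℂ A]
    (φ : A →ₗ[ℂ] ℂ) (κ : List A → ℂ) (hκ : IsCumulantFamily φ κ)
    {r : ℕ} (a : Fin r → A) (B : Finset (Fin r)) (hB : B.Nonempty) :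
    φ (blockList a B).prod =
      ∑ μ ∈ Finset.univ.filter (fun μ : Finset (Finset (Fin r)) =>
        IsPartitionOn r B μ ∧ IsNonCrossing r μ), cumPart κ a μ := by
  set m := B.card with hmdef
  have hm : 0 < m := Finset.card_pos.2 hB
  set f : Fin m → Fin r := fun i => B.orderEmbOfFin rfl i with hfdef
  have hsm : StrictMono f := (B.orderEmbOfFin rfl).strictMono
  have hfmem : ∀ i, f i ∈ B := fun i => Finset.orderEmbOfFin_mem B rfl i
  have hfsurj : ∀ j ∈ B, ∃ i, f i = j := by
    intro j hj
    have : j ∈ Set.range f := by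
      rw [show Set.range f = ↑B from Finset.range_orderEmbOfFin B rfl]
      exact hj
    exact this
  have hlist : List.ofFn (fun i => a (f i)) = blockList a B := by
    apply List.ext_getElem
    · simp [blockList, hmdef]
    · intro i h1 h2
      simp only [List.length_ofFn] at h1
      simp only [List.getElem_ofFn, blockList, List.getElem_map]
      rfl
  rw [← hlist, hκ.2 m hm (fun i => a (f i))]
  have hblock : ∀ C : Finset (Fin m),
      blockList (fun i => a (f i)) C = blockList a (C.image f) := by
    intro C
    unfold blockList
    rw [sort_image_strictMono' hsm C, List.map_map]
    rfl
  refine Finset.sum_bij (fun P _ => P.image (fun C => C.image f)) ?_ ?_ ?_ ?_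
  · intro P hP
    simp only [Finset.mem_filter, Finset.mem_univ, true_and] at hP ⊢
    obtain ⟨⟨hPb, hPu⟩, hPnc⟩ := hP
    refine ⟨⟨?_, ?_⟩, ?_⟩
    · intro D hD
      obtain ⟨C, hC, rfl⟩ := Finset.mem_image.1 hD
      exact ⟨((hPb C hC).1).image f, fun j hj => by
        obtain ⟨i, _, rfl⟩ := Finset.mem_image.1 hj; exact hfmem i⟩
    · intro j hj
      obtain ⟨i, rfl⟩ := hfsurj j hj
      obtain ⟨C, ⟨hC, hiC⟩, hCu⟩ := hPu i (Finset.mem_univ i)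
      refine ⟨C.image f, ⟨Finset.mem_image_of_mem _ hC, Finset.mem_image_of_mem _ hiC⟩, ?_⟩
      rintro D ⟨hD, hiD⟩
      obtain ⟨C', hC', rfl⟩ := Finset.mem_image.1 hD
      obtain ⟨i', hi', hii⟩ := Finset.mem_image.1 hiD
      cases hsm.injective hii
      rw [hCu C' ⟨hC', hi'⟩]
    · rintro ⟨D₁, D₂, i, j, k, l, hD₁, hD₂, hne, hij, hjk, hkl, hi1, hk1, hj2, hl2⟩
      obtain ⟨C₁, hC₁, rfl⟩ := Finset.mem_image.1 hD₁
      obtain ⟨C₂, hC₂, rfl⟩ := Finset.mem_image.1 hD₂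
      obtain ⟨i₀, hi₀, rfl⟩ := Finset.mem_image.1 hi1
      obtain ⟨k₀, hk₀, rfl⟩ := Finset.mem_image.1 hk1
      obtain ⟨j₀, hj₀, rfl⟩ := Finset.mem_image.1 hj2
      obtain ⟨l₀, hl₀, rfl⟩ := Finset.mem_image.1 hl2
      exact hPnc ⟨C₁, C₂, i₀, j₀, k₀, l₀, hC₁, hC₂,
        fun h => hne (by rw [h]),
        hsm.lt_iff_lt.1 hij, hsm.lt_iff_lt.1 hjk, hsm.lt_iff_lt.1 hkl,
        hi₀, hk₀, hj₀, hl₀⟩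
  · intro P₁ h₁ P₂ h₂ h
    exact Finset.image_injective (Finset.image_injective hsm.injective) h
  · intro μ hμ
    simp only [Finset.mem_filter, Finset.mem_univ, true_and] at hμ
    obtain ⟨⟨hμb, hμu⟩, hμnc⟩ := hμ
    refine ⟨μ.image (fun D => D.preimage f hsm.injective.injOn), ?_, ?_⟩
    · simp only [Finset.mem_filter, Finset.mem_univ, true_and]
      constructor
      · constructor
        · intro C hC
          obtain ⟨D, hD, rfl⟩ := Finset.mem_image.1 hC
          obtain ⟨j, hj⟩ := (hμb D hD).1
          obtain ⟨i, rfl⟩ := hfsurj j ((hμb D hD).2 hj)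
          exact ⟨⟨i, Finset.mem_preimage.2 hj⟩, Finset.subset_univ _⟩
        · intro i _
          obtain ⟨D, ⟨hD, hfD⟩, hDu⟩ := hμu (f i) (hfmem i)
          refine ⟨D.preimage f hsm.injective.injOn,
            ⟨Finset.mem_image_of_mem _ hD, Finset.mem_preimage.2 hfD⟩, ?_⟩
          rintro C ⟨hC, hiC⟩
          obtain ⟨D', hD', rfl⟩ := Finset.mem_image.1 hC
          rw [hDu D' ⟨hD', Finset.mem_preimage.1 hiC⟩]
      · rintro ⟨C₁, C₂, i, j, k, l, hC₁, hC₂, hne, hij, hjk, hkl, hi1, hk1, hj2, hl2⟩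
        obtain ⟨D₁, hD₁, rfl⟩ := Finset.mem_image.1 hC₁
        obtain ⟨D₂, hD₂, rfl⟩ := Finset.mem_image.1 hC₂
        exact hμnc ⟨D₁, D₂, f i, f j, f k, f l, hD₁, hD₂,
          fun h => hne (by rw [h]), hsm hij, hsm hjk, hsm hkl,
          Finset.mem_preimage.1 hi1, Finset.mem_preimage.1 hk1,
          Finset.mem_preimage.1 hj2, Finset.mem_preimage.1 hl2⟩
    · have himgpre : ∀ D ∈ μ, (D.preimage f hsm.injective.injOn).image f = D := by
        intro D hD
        ext j
        simp only [Finset.mem_image, Finset.mem_preimage]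
        constructor
        · rintro ⟨i, hi, rfl⟩; exact hi
        · intro hj
          obtain ⟨i, rfl⟩ := hfsurj j ((hμb D hD).2 hj)
          exact ⟨i, hj, rfl⟩
      rw [Finset.image_image]
      have : ∀ D ∈ μ, ((fun C : Finset (Fin m) => C.image f) ∘
          (fun D : Finset (Fin r) => D.preimage f hsm.injective.injOn)) D = id D := by
        intro D hD
        exact himgpre D hD
      rw [Finset.image_congr this, Finset.image_id]
  · intro P hP
    rw [cumPart, cumPart, Finset.prod_image
      (fun C _ C' _ h => Finset.image_injective hsm.injective h)]
    exact Finset.prod_congr rfl fun C _ => congrArg κ (hblock C)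


/-- If `σ` is a non-crossing partition of `E ⊆ {1,…,r}` and `K(σ)`
is the largest partition of the complement `F` with `σ ∪ K(σ)` non-crossing, then the
sum of `κ_μ` over all partitions `μ` of `F` with `σ ∪ μ` non-crossing equals
`φ_{K(σ)}`. -/
theorem cumulant_sum_over_compatible_partitions
    (A : Type) [Ring A] [Algebra ℂ A] [StarRing A] [StarModule ℂ A]
    (φ : A →ₗ[ℂ] ℂ) (hφ : IsState φ)
    (κ : List A → ℂ) (hκ : IsCumulantFamily φ κ)
    (r : ℕ) (hr : 0 < r) (E F : Finset (Fin r))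
    (hdisj : Disjoint E F) (hcover : E ∪ F = Finset.univ)
    (σ : Finset (Finset (Fin r))) (hσ : IsPartitionOn r E σ) (hσnc : IsNonCrossing r σ)
    (K : Finset (Finset (Fin r))) (hK : IsPartitionOn r F K)
    (hKnc : IsNonCrossing r (σ ∪ K))
    (hKmax : ∀ μ : Finset (Finset (Fin r)), IsPartitionOn r F μ →
        IsNonCrossing r (σ ∪ μ) → ∀ B ∈ μ, ∃ B' ∈ K, B ⊆ B')
    (a : Fin r → A) :
    (∑ μ ∈ Finset.univ.filter (fun μ : Finset (Finset (Fin r)) =>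
        IsPartitionOn r F μ ∧ IsNonCrossing r (σ ∪ μ)), cumPart κ a μ) =
      momPart φ a K := by
  classical
  have hKdisj : ∀ B ∈ K, ∀ B' ∈ K, B ≠ B' → ∀ i, i ∈ B → i ∈ B' → False := by
    intro B hB B' hB' hne i hi hi'
    obtain ⟨D, -, hDu⟩ := hK.2 i ((hK.1 B hB).2 hi)
    exact hne ((hDu B ⟨hB, hi⟩).trans (hDu B' ⟨hB', hi'⟩).symm)
  set LP : Finset (Fin r) → Finset (Finset (Finset (Fin r))) := fun B =>
    Finset.univ.filter (fun μ : Finset (Finset (Fin r)) =>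
      IsPartitionOn r B μ ∧ IsNonCrossing r μ) with hLP
  have h1 : momPart φ a K = ∑ g ∈ K.pi (fun B => LP B),
      ∏ x ∈ K.attach, cumPart κ a (g x.1 x.2) := by
    rw [momPart, Finset.prod_congr rfl (fun B hB =>
      moment_eq_block_sum φ κ hκ a B (hK.1 B hB).1)]
    exact Finset.prod_sum K (fun B => LP B) (fun _ ν => cumPart κ a ν)
  rw [h1]
  refine Finset.sum_bij (fun μ _ => fun B _ => μ.filter (· ⊆ B)) ?_ ?_ ?_ ?_
  · -- membership in the pi set
    intro μ hμ
    simp only [Finset.mem_filter, Finset.mem_univ, true_and] at hμ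
    obtain ⟨⟨hμb, hμu⟩, hμnc⟩ := hμ
    rw [Finset.mem_pi]
    intro B hB
    rw [hLP]
    simp only [Finset.mem_filter, Finset.mem_univ, true_and]
    refine ⟨⟨?_, ?_⟩, ?_⟩
    · intro D hD
      rw [Finset.mem_filter] at hD
      exact ⟨(hμb D hD.1).1, hD.2⟩
    · intro i hiB
      have hiF : i ∈ F := (hK.1 B hB).2 hiB
      obtain ⟨D, ⟨hD, hiD⟩, hDu⟩ := hμu i hiF
      obtain ⟨B', hB', hDB'⟩ := hKmax μ ⟨hμb, hμu⟩ hμnc D hD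
      have hBB' : B' = B := by
        by_contra hne
        exact hKdisj B' hB' B hB hne i (hDB' hiD) hiB
      refine ⟨D, ⟨Finset.mem_filter.2 ⟨hD, hBB' ▸ hDB'⟩, hiD⟩, ?_⟩
      rintro D' ⟨hD', hiD'⟩
      exact hDu D' ⟨(Finset.mem_filter.1 hD').1, hiD'⟩
    · exact isNonCrossing_of_subset
        (fun D hD => Finset.mem_union_right σ (Finset.mem_filter.1 hD).1) hμnc
  · -- injectivity
    intro μ₁ h₁ μ₂ h₂ h
    simp only [Finset.mem_filter, Finset.mem_univ, true_and] at h₁ h₂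
    have hun : ∀ μ : Finset (Finset (Fin r)), IsPartitionOn r F μ →
        IsNonCrossing r (σ ∪ μ) → μ = K.biUnion (fun B => μ.filter (· ⊆ B)) := by
      intro μ hp hnc
      ext D
      simp only [Finset.mem_biUnion, Finset.mem_filter]
      constructor
      · intro hD
        obtain ⟨B, hB, hDB⟩ := hKmax μ hp hnc D hD
        exact ⟨B, hB, hD, hDB⟩
      · rintro ⟨B, _, hD, _⟩; exact hD
    have e1 := hun μ₁ h₁.1 h₁.2
    have e2 := hun μ₂ h₂.1 h₂.2
    rw [e1, e2]
    apply Finset.biUnion_congr rfl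
    intro B hB
    exact congrFun (congrFun h B) hB
  · -- surjectivity
    intro g hg
    rw [Finset.mem_pi] at hg
    set μ₀ : Finset (Finset (Fin r)) := K.attach.biUnion (fun B => g B.1 B.2) with hμ₀
    have hmem₀ : ∀ D, D ∈ μ₀ ↔ ∃ B : {x // x ∈ K}, D ∈ g B.1 B.2 := by
      intro D
      rw [hμ₀]
      simp [Finset.mem_biUnion]
    have hgprop : ∀ (B) (hB : B ∈ K), IsPartitionOn r B (g B hB) ∧
        IsNonCrossing r (g B hB) := by
      intro B hB
      have := hg B hB
      rw [hLP] at this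
      simpa using this
    have hblocks₀ : ∀ D ∈ μ₀, D.Nonempty ∧ D ⊆ F := by
      intro D hD
      obtain ⟨B, hDg⟩ := (hmem₀ D).1 hD
      have h := ((hgprop B.1 B.2).1).1 D hDg
      exact ⟨h.1, h.2.trans (hK.1 B.1 B.2).2⟩
    have hinB : ∀ D ∈ μ₀, ∀ (B) (hB : B ∈ K), D ⊆ B → D ∈ g B hB := by
      intro D hD B hB hDB
      obtain ⟨B', hDg⟩ := (hmem₀ D).1 hD
      have hDB' : D ⊆ B'.1 := (((hgprop B'.1 B'.2).1).1 D hDg).2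
      obtain ⟨i, hi⟩ := (((hgprop B'.1 B'.2).1).1 D hDg).1
      have : B'.1 = B := by
        by_contra hne
        exact hKdisj B'.1 B'.2 B hB hne i (hDB' hi) (hDB hi)
      subst this
      exact hDg
    have hpart₀ : IsPartitionOn r F μ₀ := by
      refine ⟨hblocks₀, ?_⟩
      intro i hiF
      obtain ⟨B, ⟨hB, hiB⟩, hBu⟩ := hK.2 i hiF
      obtain ⟨D, ⟨hDg, hiD⟩, hDu⟩ := ((hgprop B hB).1).2 i hiB
      refine ⟨D, ⟨(hmem₀ D).2 ⟨⟨B, hB⟩, hDg⟩, hiD⟩, ?_⟩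
      rintro D' ⟨hD', hiD'⟩
      obtain ⟨B', hD'g⟩ := (hmem₀ D').1 hD'
      have hD'B' : D' ⊆ B'.1 := (((hgprop B'.1 B'.2).1).1 D' hD'g).2
      have : B'.1 = B := hBu B'.1 ⟨B'.2, hD'B' hiD'⟩
      exact hDu D' ⟨hinB D' hD' B hB (this ▸ hD'B'), hiD'⟩
    have hnc₀ : IsNonCrossing r (σ ∪ μ₀) := by
      rintro ⟨B₁, B₂, i, j, k, l, h1m, h2m, hne, hij, hjk, hkl, hi1, hk1, hj2, hl2⟩
      have hamb : ∀ D ∈ σ ∪ μ₀, ∃ C, C ∈ σ ∪ K ∧ D ⊆ C ∧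
          ((D ∈ σ ∧ C = D) ∨ ∃ hC : C ∈ K, D ∈ g C hC) := by
        intro D hD
        rcases Finset.mem_union.1 hD with hD | hD
        · exact ⟨D, Finset.mem_union_left _ hD, subset_rfl, Or.inl ⟨hD, rfl⟩⟩
        · obtain ⟨B, hDg⟩ := (hmem₀ D).1 hD
          exact ⟨B.1, Finset.mem_union_right _ B.2,
            (((hgprop B.1 B.2).1).1 D hDg).2, Or.inr ⟨B.2, hDg⟩⟩
      obtain ⟨C₁, hC₁, hB₁C₁, hcase₁⟩ := hamb B₁ h1m
      obtain ⟨C₂, hC₂, hB₂C₂, hcase₂⟩ := hamb B₂ h2m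
      by_cases hCeq : C₁ = C₂
      · -- same ambient block: must both come from the same g-partition
        rcases hcase₁ with ⟨hσ₁, hc1⟩ | ⟨hCK₁, hg₁⟩
        · rcases hcase₂ with ⟨hσ₂, hc2⟩ | ⟨hCK₂, hg₂⟩
          · exact hne (hc1 ▸ hc2 ▸ hCeq)
          · have hiE : i ∈ E := (hσ.1 B₁ hσ₁).2 hi1
            have hiF : i ∈ F := (hK.1 C₂ hCK₂).2 (by
              rw [← hCeq, hc1]; exact hi1)
            exact (Finset.disjoint_left.1 hdisj hiE) hiF
        · rcases hcase₂ with ⟨hσ₂, hc2⟩ | ⟨hCK₂, hg₂⟩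
          · have hjE : j ∈ E := (hσ.1 B₂ hσ₂).2 hj2
            have hjF : j ∈ F := (hK.1 C₁ hCK₁).2 (by
              rw [hCeq, hc2]; exact hj2)
            exact (Finset.disjoint_left.1 hdisj hjE) hjF
          · subst hCeq
            exact (hgprop C₁ hCK₁).2 ⟨B₁, B₂, i, j, k, l, hg₁, hg₂, hne,
              hij, hjk, hkl, hi1, hk1, hj2, hl2⟩
      · exact hKnc ⟨C₁, C₂, i, j, k, l, hC₁, hC₂, hCeq, hij, hjk, hkl,
          hB₁C₁ hi1, hB₁C₁ hk1, hB₂C₂ hj2, hB₂C₂ hl2⟩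
    refine ⟨μ₀, ?_, ?_⟩
    · simp only [Finset.mem_filter, Finset.mem_univ, true_and]
      exact ⟨hpart₀, hnc₀⟩
    · funext B hB
      ext D
      simp only [Finset.mem_filter]
      constructor
      · rintro ⟨hD, hDB⟩
        exact hinB D hD B hB hDB
      · intro hDg
        exact ⟨(hmem₀ D).2 ⟨⟨B, hB⟩, hDg⟩, (((hgprop B hB).1).1 D hDg).2⟩
  · -- value equality
    intro μ hμ
    simp only [Finset.mem_filter, Finset.mem_univ, true_and] at hμ
    obtain ⟨hp, hnc⟩ := hμ
    have hun : μ = K.biUnion (fun B => μ.filter (· ⊆ B)) := by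
      ext D
      simp only [Finset.mem_biUnion, Finset.mem_filter]
      constructor
      · intro hD
        obtain ⟨B, hB, hDB⟩ := hKmax μ hp hnc D hD
        exact ⟨B, hB, hD, hDB⟩
      · rintro ⟨B, _, hD, _⟩; exact hD
    have hdisjf : ∀ B ∈ (K : Set (Finset (Fin r))), ∀ B' ∈ (K : Set (Finset (Fin r))),
        B ≠ B' → Disjoint (μ.filter (· ⊆ B)) (μ.filter (· ⊆ B')) := by
      intro B hB B' hB' hne
      rw [Finset.disjoint_left]
      intro D hD hD'
      obtain ⟨hDμ, hDB⟩ := Finset.mem_filter.1 hD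
      obtain ⟨-, hDB'⟩ := Finset.mem_filter.1 hD'
      obtain ⟨i, hi⟩ := (hp.1 D hDμ).1
      exact hKdisj B hB B' hB' hne i (hDB hi) (hDB' hi)
    calc cumPart κ a μ = ∏ B ∈ K, cumPart κ a (μ.filter (· ⊆ B)) := by
          simp only [cumPart]
          conv_lhs => rw [hun]
          exact Finset.prod_biUnion hdisjf
      _ = ∏ x ∈ K.attach, cumPart κ a (μ.filter (· ⊆ x.1)) := by
          rw [Finset.prod_attach K (fun B => cumPart κ a (μ.filter (· ⊆ B)))]
end
end
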